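/- Let $(A_n)$ be a sequence of events. If $P(\limsup_n A_n) > 0$, then for every $m \geq 0$, either $P(A_n) \not\to 0$ or $\sum_{n=1}^\infty P(A_n \cap A_{n+1}^c \cap \cdots \cap A_{n+m}^c) = \infty$. -/

import Mathlib

open MeasureTheory Filter Set

theorem contrapositive_main {Ω : Type*} [MeasurableSpace Ω] (μ : Measure Ω)
    [IsProbabilityMeasure μ] (A : ℕ → Set Ω) (hA : ∀ n, MeasurableSet (A n))
    (h : 0 < μ (limsup A atTop)) (m : ℕ) :
    ¬ Tendsto (fun n => μ (A n)) atTop (nhds 0) ∨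
      ∑' n, μ (A n ∩ ⋂ j ∈ Finset.Icc 1 m, (A (n + j))ᶜ) = ⊤ := by
  by_contra hcon
  push_neg at hcon
  obtain ⟨h1, h2⟩ := hcon
  set B : ℕ → Set Ω := fun n => A n ∩ ⋂ j ∈ Finset.Icc 1 m, (A (n + j))ᶜ with hBdef
  have hBC : μ (limsup B atTop) = 0 := measure_limsup_atTop_eq_zero h2
  set C : ℕ → Set Ω := fun k => ⋃ j ∈ Finset.range m, A (k + j) with hCdef
  have hCtend : Tendsto (fun k => μ (C k)) atTop (nhds 0) := by
    have hsum : Tendsto (fun k => ∑ j ∈ Finset.range m, μ (A (k + j))) atTop (nhds 0) := by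
      have := tendsto_finset_sum (Finset.range m)
        (fun j _ => h1.comp (tendsto_add_atTop_nat j))
      simpa using this
    refine tendsto_of_tendsto_of_tendsto_of_le_of_le tendsto_const_nhds hsum
      (fun k => zero_le) (fun k => ?_)
    exact measure_biUnion_finset_le _ _
  have hliminf : μ (liminf C atTop) = 0 := by
    rw [liminf_eq_iSup_iInf_of_nat]
    rw [iSup_eq_iUnion]
    refine measure_iUnion_null fun n => ?_
    refine le_antisymm ?_ zero_le
    refine ge_of_tendsto hCtend ?_
    refine eventually_atTop.2 ⟨n, fun k hk => ?_⟩
    exact measure_mono (iInf_le_of_le k (iInf_le _ hk))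
  have hsub : limsup A atTop ⊆ limsup B atTop ∪ liminf C atTop := by
    intro ω hω
    by_cases hωB : ω ∈ limsup B atTop
    · exact Or.inl hωB
    right
    have hωB' : ∀ᶠ n in atTop, ω ∉ B n := by
      rwa [mem_limsup_iff_frequently_mem, not_frequently] at hωB
    rw [mem_limsup_iff_frequently_mem] at hω
    obtain ⟨N, hN⟩ := eventually_atTop.1 hωB'
    obtain ⟨n₀, hn₀N, hn₀A⟩ := frequently_atTop.1 hω N
    have step : ∀ n, N ≤ n → ω ∈ A n → ∃ j, 1 ≤ j ∧ j ≤ m ∧ ω ∈ A (n + j) := by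
      intro n hn hAn
      have := hN n hn
      rw [hBdef] at this
      simp only [mem_inter_iff, mem_iInter, mem_compl_iff, Finset.mem_Icc, not_and,
        not_forall] at this
      obtain ⟨j, hj, hj2⟩ := this hAn
      exact ⟨j, hj.1, hj.2, not_not.mp hj2⟩
    have hm : 0 < m := by
      by_contra hm0
      obtain ⟨j, hj1, hj2, _⟩ := step n₀ hn₀N hn₀A
      omega
    have key : ∀ k, n₀ ≤ k → ∃ n, k ≤ n ∧ n < k + m ∧ N ≤ n ∧ ω ∈ A n := by
      intro k hk
      induction k, hk using Nat.le_induction with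
      | base => exact ⟨n₀, le_refl _, by omega, hn₀N, hn₀A⟩
      | succ k hk ih =>
        obtain ⟨n, hkn, hnk, hNn, hAn⟩ := ih
        rcases eq_or_lt_of_le hkn with heq | hlt
        · obtain ⟨j, hj1, hj2, hj3⟩ := step n hNn hAn
          exact ⟨n + j, by omega, by omega, by omega, hj3⟩
        · exact ⟨n, by omega, by omega, hNn, hAn⟩
    rw [mem_liminf_iff_eventually_mem]
    refine eventually_atTop.2 ⟨n₀, fun k hk => ?_⟩
    obtain ⟨n, hkn, hnk, _, hAn⟩ := key k hk
    rw [hCdef]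
    refine mem_iUnion₂.2 ⟨n - k, Finset.mem_range.2 (by omega), ?_⟩
    rwa [show k + (n - k) = n by omega]
  have : μ (limsup A atTop) = 0 := by
    refine le_antisymm ?_ zero_le
    calc μ (limsup A atTop) ≤ μ (limsup B atTop ∪ liminf C atTop) := measure_mono hsub
    _ ≤ μ (limsup B atTop) + μ (liminf C atTop) := measure_union_le _ _
    _ = 0 := by rw [hBC, hliminf, add_zero]
  exact absurd this (by simpa using h.ne')
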